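/- If a finite sum of square roots of positive integers is an integer, and each summand is either an integer or the square root of an integer, then each summand is itself an integer. More precisely: if n₁, ..., nₖ are positive integers and √n₁ + ... + √nₖ is an integer, then each √nᵢ is an integer. -/

import Mathlib

open Polynomial IntermediateField

private lemma sqrt_nat_isIntegral (n : ℕ) : IsIntegral ℚ (Real.sqrt n) := by
  refine ⟨X ^ 2 - C (n : ℚ), monic_X_pow_sub_C _ two_ne_zero, ?_⟩
  have : Real.sqrt n ^ 2 = (n : ℝ) := Real.sq_sqrt (by positivity)
  simp [eval₂_sub, this]

/-- If `n₁, ..., nₖ` are positive integers and `√n₁ + ... + √nₖ` is an integer,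
then each `√nᵢ` is an integer. -/
theorem sum_sqrt_int_of_int {k : ℕ} (n : Fin k → ℕ) (hpos : ∀ i, 0 < n i)
    (h : ∃ m : ℤ, ∑ i, Real.sqrt (n i) = (m : ℝ)) :
    ∀ i, ∃ m : ℤ, Real.sqrt (n i) = (m : ℝ) := by
  obtain ⟨m, hm⟩ := h
  intro i
  by_contra hi
  have hirr : Irrational (Real.sqrt (n i)) :=
    irrational_nrt_of_notint_nrt 2 (n i)
      (by rw [Real.sq_sqrt (by positivity)]; push_cast; ring) hi two_pos
  set S : Set ℝ := Set.range fun j : Fin k => Real.sqrt (n j) with hSdef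
  have hK : ∀ s ∈ S, IsIntegral ℚ s ∧ ((minpoly ℚ s).map (algebraMap ℚ ℂ)).Splits := by
    rintro s ⟨j, rfl⟩
    exact ⟨sqrt_nat_isIntegral _, IsAlgClosed.splits _⟩
  have hmem : ∀ j : Fin k, Real.sqrt (n j) ∈ adjoin ℚ S := fun j =>
    subset_adjoin ℚ S ⟨j, rfl⟩
  -- the minimal polynomial of √(n i) is X² - n i
  have hint := sqrt_nat_isIntegral (n i)
  have hmon : (X ^ 2 - C ((n i : ℚ))).Monic := monic_X_pow_sub_C _ two_ne_zero
  have hdvd : minpoly ℚ (Real.sqrt (n i)) ∣ X ^ 2 - C ((n i : ℚ)) := by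
    apply minpoly.dvd
    have : Real.sqrt (n i) ^ 2 = (n i : ℝ) := Real.sq_sqrt (by positivity)
    simp [this]
  have hnotrange : Real.sqrt (n i) ∉ (algebraMap ℚ ℝ).range := by
    rintro ⟨q, hq⟩
    exact hirr ⟨q, by rw [← hq]; simp⟩
  have hdegle : 2 ≤ (minpoly ℚ (Real.sqrt (n i))).natDegree :=
    (minpoly.two_le_natDegree_iff hint).mpr hnotrange
  have hmp : (X ^ 2 - C ((n i : ℚ))) = minpoly ℚ (Real.sqrt (n i)) :=
    eq_of_monic_of_dvd_of_natDegree_le (minpoly.monic hint) hmon hdvd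
      (by rw [natDegree_X_pow_sub_C]; exact hdegle)
  -- an embedding sending √(n i) to -√(n i)
  have hy : aeval (-((Real.sqrt (n i) : ℝ) : ℂ)) (minpoly ℚ (Real.sqrt (n i))) = 0 := by
    rw [← hmp]
    have : ((Real.sqrt (n i) : ℝ) : ℂ) ^ 2 = ((n i : ℝ) : ℂ) := by
      rw [← Complex.ofReal_pow, Real.sq_sqrt (by positivity)]
    simp [this]
  obtain ⟨φ, hφ⟩ := exists_algHom_adjoin_of_splits_of_aeval hK (hmem i) hy
  -- each √(n j) maps to ± itself
  have hsign : ∀ j : Fin k, ∃ c : ℝ,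
      (c = Real.sqrt (n j) ∨ c = -Real.sqrt (n j)) ∧
        φ ⟨Real.sqrt (n j), hmem j⟩ = (c : ℂ) := by
    intro j
    have hsq : (⟨Real.sqrt (n j), hmem j⟩ : adjoin ℚ S) ^ 2 = ((n j : ℕ) : adjoin ℚ S) := by
      ext
      push_cast
      exact Real.sq_sqrt (by positivity)
    have h2 : (φ ⟨Real.sqrt (n j), hmem j⟩) ^ 2 = (((Real.sqrt (n j) : ℝ)) : ℂ) ^ 2 := by
      rw [← map_pow, hsq, map_natCast, ← Complex.ofReal_pow,
        Real.sq_sqrt (by positivity)]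
      simp
    rcases (Commute.all _ _).sq_eq_sq_iff_eq_or_eq_neg.mp h2 with h' | h'
    · exact ⟨Real.sqrt (n j), Or.inl rfl, h'⟩
    · exact ⟨-Real.sqrt (n j), Or.inr rfl, by rw [h']; push_cast; ring⟩
  choose c hc hφc using hsign
  -- the value at i is the negative root
  have hci : c i = -Real.sqrt (n i) := by
    have := (hφc i).symm.trans hφ
    exact_mod_cast Complex.ofReal_injective (by exact_mod_cast this)
  -- apply φ to the sum
  have hsum_mem : (∑ j, Real.sqrt (n j)) ∈ adjoin ℚ S := sum_mem fun j _ => hmem j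
  have hsumeq : (⟨∑ j, Real.sqrt (n j), hsum_mem⟩ : adjoin ℚ S)
      = ∑ j, (⟨Real.sqrt (n j), hmem j⟩ : adjoin ℚ S) := by
    ext; push_cast; rfl
  have hmint : (⟨∑ j, Real.sqrt (n j), hsum_mem⟩ : adjoin ℚ S) = ((m : ℤ) : adjoin ℚ S) := by
    ext; push_cast [hm]; rfl
  have hphisum : ((m : ℤ) : ℂ) = ∑ j, ((c j : ℝ) : ℂ) := by
    calc ((m : ℤ) : ℂ) = φ ((m : ℤ) : adjoin ℚ S) := (map_intCast φ m).symm
    _ = φ (∑ j, (⟨Real.sqrt (n j), hmem j⟩ : adjoin ℚ S)) := by rw [← hmint, hsumeq]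
    _ = ∑ j, φ (⟨Real.sqrt (n j), hmem j⟩ : adjoin ℚ S) := map_sum φ _ _
    _ = ∑ j, ((c j : ℝ) : ℂ) := by simp_rw [hφc]
  have hreal : (m : ℝ) = ∑ j, c j := by
    have := hphisum
    push_cast at this ⊢
    exact_mod_cast this
  -- derive a contradiction
  have hzero : ∑ j, (Real.sqrt (n j) - c j) = 0 := by
    rw [Finset.sum_sub_distrib, hm, ← hreal, sub_self]
  have hnonneg : ∀ j ∈ Finset.univ, (0 : ℝ) ≤ Real.sqrt (n j) - c j := by
    intro j _
    rcases hc j with h' | h' <;> rw [h']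
    · simp
    · have : 0 ≤ Real.sqrt (n j) := Real.sqrt_nonneg _
      linarith
  have := (Finset.sum_eq_zero_iff_of_nonneg hnonneg).mp hzero i (Finset.mem_univ i)
  rw [hci] at this
  have hpos' : 0 < Real.sqrt (n i) := Real.sqrt_pos.mpr (by exact_mod_cast hpos i)
  linarith
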